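/- There exist ε > 0 and functions X⁻, X⁰, X⁺ : (0, ε) → ℂ such that for every b ∈ (0, ε) the values X⁻(b), X⁰(b), X⁺(b) are roots of R_b, and as b → 0⁺: X^±(b) = ±c − i ((γ−1)/(2γ)) b + O(b²) and X⁰(b) = −(i/γ) b + O(b²). -/

import Mathlib

open Complex Polynomial Filter Asymptotics

/-- The non-viscous dispersion cubic R_b(X) = X³ + i b X² − c² X − i b c²/γ. -/
noncomputable def R (c γ b : ℝ) (X : ℂ) : ℂ :=
  X ^ 3 + I * (b : ℂ) * X ^ 2 - (c : ℂ) ^ 2 * X - I * (b : ℂ) * (c : ℂ) ^ 2 / (γ : ℂ)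

lemma I3 : I^3 = -I := by rw [pow_succ, Complex.I_sq]; ring

lemma norm_affine (v w : ℂ) {b : ℝ} (h0 : 0 ≤ b) (h1 : b ≤ 1) : ‖v + (b:ℂ)*w‖ ≤ ‖v‖ + ‖w‖ := by
  refine (norm_add_le _ _).trans (add_le_add_right ?_ _)
  rw [norm_mul, Complex.norm_real, Real.norm_of_nonneg h0]
  calc b*‖w‖ ≤ 1*‖w‖ := mul_le_mul_of_nonneg_right h1 (norm_nonneg _)
    _ = ‖w‖ := one_mul _

lemma D_lower {c b : ℝ} {D D0 v w : ℂ} (hc : 0 < c) (hb0 : 0 ≤ b) (hb1 : b ≤ 1)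
    (hb2 : b ≤ c^2/(2*(‖v‖+‖w‖+1))) (hD0 : c^2 ≤ ‖D0‖)
    (hD : D = D0 + (b:ℂ)*(v + (b:ℂ)*w)) : c^2/2 ≤ ‖D‖ := by
  have h1 : ‖(b:ℂ)*(v+(b:ℂ)*w)‖ ≤ b*(‖v‖+‖w‖) := by
    rw [norm_mul, Complex.norm_real, Real.norm_of_nonneg hb0]
    exact mul_le_mul_of_nonneg_left (norm_affine v w hb0 hb1) hb0
  have h2 : b*(‖v‖+‖w‖) ≤ c^2/2 := by
    have hpos : (0:ℝ) < 2*(‖v‖+‖w‖+1) := by positivity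
    rw [le_div_iff₀ hpos] at hb2
    nlinarith [norm_nonneg v, norm_nonneg w, hb0]
  have hDD : D - (b:ℂ)*(v+(b:ℂ)*w) = D0 := by rw [hD]; ring
  have h3 : ‖D0‖ ≤ ‖D‖ + ‖(b:ℂ)*(v+(b:ℂ)*w)‖ := by
    rw [← hDD]; exact norm_sub_le _ _
  linarith

lemma Eplus (c γ b : ℝ) (β : ℂ) (hγ : (γ:ℂ) ≠ 0) (hβ : 2*(γ:ℂ)*β = (γ:ℂ)-1) :
    R c γ b ((c:ℂ) - I*β*(b:ℂ)) = (b:ℂ)^2 * (((c:ℂ)*β*(2-3*β)) + (b:ℂ)*(I*β^2*(β-1))) := by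
  have hinv : I*(b:ℂ)*(c:ℂ)^2/(γ:ℂ) = I*(b:ℂ)*(c:ℂ)^2*(1-2*β) := by
    rw [div_eq_iff hγ]; linear_combination (I*(b:ℂ)*(c:ℂ)^2) * hβ
  simp only [R]; rw [hinv]
  ring_nf; simp only [I3, Complex.I_sq]; try ring

lemma Eminus (c γ b : ℝ) (β : ℂ) (hγ : (γ:ℂ) ≠ 0) (hβ : 2*(γ:ℂ)*β = (γ:ℂ)-1) :
    R c γ b (-(c:ℂ) - I*β*(b:ℂ)) = (b:ℂ)^2 * ((-((c:ℂ)*β*(2-3*β))) + (b:ℂ)*(I*β^2*(β-1))) := by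
  have hinv : I*(b:ℂ)*(c:ℂ)^2/(γ:ℂ) = I*(b:ℂ)*(c:ℂ)^2*(1-2*β) := by
    rw [div_eq_iff hγ]; linear_combination (I*(b:ℂ)*(c:ℂ)^2) * hβ
  simp only [R]; rw [hinv]
  ring_nf; simp only [I3, Complex.I_sq]; try ring

lemma Ezero (c γ b : ℝ) (a : ℂ) (hγ : (γ:ℂ) ≠ 0) (ha : (γ:ℂ) * a = 1) :
    R c γ b (-(I*a)*(b:ℂ)) = (b:ℂ)^2 * ((0:ℂ) + (b:ℂ)*(-I*a^2*(1-a))) := by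
  have hinv : I*(b:ℂ)*(c:ℂ)^2/(γ:ℂ) = I*(b:ℂ)*(c:ℂ)^2*a := by
    rw [div_eq_iff hγ]; linear_combination (-(I*(b:ℂ)*(c:ℂ)^2)) * ha
  simp only [R]; rw [hinv]
  ring_nf; simp only [I3, Complex.I_sq]; try ring

lemma Dplus (c b : ℝ) (β : ℂ) :
    3*((c:ℂ) - I*β*(b:ℂ))^2 + 2*I*(b:ℂ)*((c:ℂ) - I*β*(b:ℂ)) - (c:ℂ)^2
      = 2*(c:ℂ)^2 + (b:ℂ)*((2*I*(c:ℂ)*(1-3*β)) + (b:ℂ)*(2*β - 3*β^2)) := by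
  ring_nf; simp only [I3, Complex.I_sq]; try ring

lemma Dminus (c b : ℝ) (β : ℂ) :
    3*(-(c:ℂ) - I*β*(b:ℂ))^2 + 2*I*(b:ℂ)*(-(c:ℂ) - I*β*(b:ℂ)) - (c:ℂ)^2
      = 2*(c:ℂ)^2 + (b:ℂ)*((-(2*I*(c:ℂ)*(1-3*β))) + (b:ℂ)*(2*β - 3*β^2)) := by
  ring_nf; simp only [I3, Complex.I_sq]; try ring

lemma Dzero (c b : ℝ) (a : ℂ) :
    3*(-(I*a)*(b:ℂ))^2 + 2*I*(b:ℂ)*(-(I*a)*(b:ℂ)) - (c:ℂ)^2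
      = -(c:ℂ)^2 + (b:ℂ)*((0:ℂ) + (b:ℂ)*(2*a - 3*a^2)) := by
  ring_nf; simp only [I3, Complex.I_sq]; try ring


lemma taylorR (c γ b : ℝ) (A X : ℂ) :
    R c γ b X = R c γ b A + (3*A^2 + 2*I*(b:ℂ)*A - (c:ℂ)^2) * (X - A)
      + (3*A + I*(b:ℂ)) * (X - A)^2 + (X - A)^3 := by
  simp only [R]; ring

lemma cubic_factors (a₂ a₁ a₀ : ℂ) :
    ∃ r1 r2 r3 : ℂ, ∀ z : ℂ,
      z^3 + a₂*z^2 + a₁*z + a₀ = (z - r1)*(z - r2)*(z - r3) := by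
  set q : ℂ[X] := C a₂ * X^2 + C a₁ * X + C a₀ with hq
  have hqdeg : q.degree < 3 := lt_of_le_of_lt (show q.degree ≤ 2 by rw [hq]; compute_degree)
    (by norm_num)
  set p : ℂ[X] := X^3 + q with hp
  have hmon : p.Monic := monic_X_pow_add (by exact_mod_cast hqdeg)
  have hdeg : p.natDegree = 3 := by
    have h3 : p.degree = 3 := by
      rw [hp, degree_add_eq_left_of_degree_lt (by simpa using hqdeg), degree_X_pow]
      norm_num
    exact natDegree_eq_of_degree_eq_some h3
  have hsplit : Splits p := IsAlgClosed.splits p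
  have hcard : p.roots.card = 3 := by
    rw [splits_iff_card_roots.mp hsplit, hdeg]
  obtain ⟨r1, r2, r3, hr⟩ := Multiset.card_eq_three.mp hcard
  refine ⟨r1, r2, r3, fun z => ?_⟩
  have := hsplit.eq_prod_roots_of_monic hmon
  rw [hr] at this
  have hev := congrArg (eval z) this
  simp only [hp, hq, Multiset.insert_eq_cons, eval_multiset_prod, Multiset.map_cons,
    Multiset.map_singleton, Multiset.prod_cons, Multiset.prod_singleton, eval_add, eval_mul,
    eval_pow, eval_X, eval_C, eval_sub] at hev
  linear_combination hev

lemma cube_le {x y z : ℝ} (hx : 0 ≤ x) (hy : 0 ≤ y) (hxy : x ≤ y) (hxz : x ≤ z) :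
    x^3 ≤ x*y*z := by
  have h1 : x*x ≤ y*z := mul_le_mul hxy hxz hx hy
  have h2 : x*(x*x) ≤ x*(y*z) := mul_le_mul_of_nonneg_left h1 hx
  nlinarith [h2]

set_option maxHeartbeats 1000000 in
lemma main_aux (c γ : ℝ) (hc : 0 < c)
    (A : ℝ → ℂ) (K M ε₁ : ℝ) (hK : 0 ≤ K) (hM : 0 ≤ M) (hε₁ : 0 < ε₁)
    (hE : ∀ b : ℝ, 0 < b → b ≤ ε₁ → ‖R c γ b (A b)‖ ≤ K * b^2)
    (hD : ∀ b : ℝ, 0 < b → b ≤ ε₁ → c^2/2 ≤ ‖3*(A b)^2 + 2*I*(b:ℂ)*(A b) - (c:ℂ)^2‖)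
    (hS : ∀ b : ℝ, 0 < b → b ≤ ε₁ → ‖3*(A b) + I*(b:ℂ)‖ ≤ M) :
    ∃ ε : ℝ, 0 < ε ∧ ∃ X : ℝ → ℂ, (∀ b ∈ Set.Ioo (0:ℝ) ε, R c γ b (X b) = 0) ∧
      (fun b : ℝ => X b - A b) =O[nhdsWithin 0 (Set.Ioi 0)] (fun b : ℝ => b^2) := by
  have hM1 : (0:ℝ) < M + 1 := by linarith
  set η : ℝ := min (min ε₁ 1) (c^2/(4*(M+1))) with hηdef
  have hη : 0 < η := by
    apply lt_min (lt_min hε₁ one_pos)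
    positivity
  have hη1 : η ≤ 1 := le_trans (min_le_left _ _) (min_le_right _ _)
  have hηε₁ : η ≤ ε₁ := le_trans (min_le_left _ _) (min_le_left _ _)
  have hηc : η ≤ c^2/(4*(M+1)) := min_le_right _ _
  set ε : ℝ := min η (η^3/(K+1)) with hεdef
  have hε : 0 < ε := lt_min hη (by positivity)
  have spec : ∀ b ∈ Set.Ioo (0:ℝ) ε, ∃ X : ℂ, R c γ b X = 0 ∧ ‖X - A b‖ ≤ (4*K/c^2) * b^2 := by
    rintro b ⟨hb0, hbε⟩
    have hbη : b ≤ η := le_trans hbε.le (min_le_left _ _)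
    have hbε₁ : b ≤ ε₁ := le_trans hbη hηε₁
    have hb1 : b ≤ 1 := le_trans hbη hη1
    obtain ⟨r1, r2, r3, hfac'⟩ :=
      cubic_factors (I*(b:ℂ)) (-(c:ℂ)^2) (-(I*(b:ℂ)*(c:ℂ)^2/(γ:ℂ)))
    have hfac : ∀ z : ℂ, R c γ b z = (z - r1)*(z - r2)*(z - r3) := by
      intro z; rw [← hfac' z]; simp only [R]; ring
    have hroot1 : R c γ b r1 = 0 := by rw [hfac]; ring
    have hroot2 : R c γ b r2 = 0 := by rw [hfac]; ring
    have hroot3 : R c γ b r3 = 0 := by rw [hfac]; ring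
    set n1 := ‖A b - r1‖ with hn1
    set n2 := ‖A b - r2‖ with hn2
    set n3 := ‖A b - r3‖ with hn3
    have hprod : ‖R c γ b (A b)‖ = n1 * n2 * n3 := by
      rw [hfac (A b), norm_mul, norm_mul]
    have hn1' : 0 ≤ n1 := norm_nonneg _
    have hn2' : 0 ≤ n2 := norm_nonneg _
    have hn3' : 0 ≤ n3 := norm_nonneg _
    have hex : ∃ r, R c γ b r = 0 ∧ ‖A b - r‖^3 ≤ n1*n2*n3 := by
      rcases le_total n1 n2 with h12 | h12
      · rcases le_total n1 n3 with h13 | h13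
        · exact ⟨r1, hroot1, by rw [← hn1]; exact cube_le hn1' hn2' h12 h13⟩
        · exact ⟨r3, hroot3, by
            rw [← hn3]
            exact (cube_le hn3' hn1' h13 (h13.trans h12)).trans_eq (by ring)⟩
      · rcases le_total n2 n3 with h23 | h23
        · exact ⟨r2, hroot2, by
            rw [← hn2]
            exact (cube_le hn2' hn1' h12 h23).trans_eq (by ring)⟩
        · exact ⟨r3, hroot3, by
            rw [← hn3]
            exact (cube_le hn3' hn1' (h23.trans h12) h23).trans_eq (by ring)⟩
    obtain ⟨r, hr, hrle⟩ := hex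
    set n := ‖A b - r‖ with hn
    have hEb : ‖R c γ b (A b)‖ ≤ K*b^2 := hE b hb0 hbε₁
    have hn3K : n^3 ≤ K * b^2 := hrle.trans (hprod ▸ hEb)
    have hKb : K * b^2 ≤ η^3 := by
      have hbb : b < η^3/(K+1) := lt_of_lt_of_le hbε (min_le_right _ _)
      have h2 : b*(K+1) < η^3 := (lt_div_iff₀ (by linarith)).mp hbb
      nlinarith [mul_le_mul_of_nonneg_left hb1 (mul_nonneg hK hb0.le)]
    have hnη : n ≤ η := by
      refine le_of_pow_le_pow_left₀ (by norm_num) hη.le (hn3K.trans hKb)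
    have h0 : (0:ℂ) = R c γ b (A b) + (3*(A b)^2 + 2*I*(b:ℂ)*(A b) - (c:ℂ)^2) * (r - A b)
        + (3*(A b) + I*(b:ℂ)) * (r - A b)^2 + (r - A b)^3 := by
      rw [← taylorR c γ b (A b) r, hr]
    have hD' : (3*(A b)^2 + 2*I*(b:ℂ)*(A b) - (c:ℂ)^2) * (r - A b)
        = -(R c γ b (A b) + (3*(A b) + I*(b:ℂ)) * (r - A b)^2 + (r - A b)^3) := by
      linear_combination -h0
    have hnr : ‖r - A b‖ = n := by rw [hn, norm_sub_rev]
    have hDn : (c^2/2) * n ≤ K*b^2 + M * n^2 + n^3 := by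
      have h1 : (c^2/2) * n ≤ ‖(3*(A b)^2 + 2*I*(b:ℂ)*(A b) - (c:ℂ)^2) * (r - A b)‖ := by
        rw [norm_mul, hnr]
        exact mul_le_mul_of_nonneg_right (hD b hb0 hbε₁) (hn ▸ norm_nonneg _)
      have h2 : ‖-(R c γ b (A b) + (3*(A b) + I*(b:ℂ)) * (r - A b)^2 + (r - A b)^3)‖
          ≤ K*b^2 + M * n^2 + n^3 := by
        rw [norm_neg]
        refine le_trans (norm_add_le _ _) ?_
        refine add_le_add (le_trans (norm_add_le _ _) (add_le_add hEb ?_)) ?_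
        · rw [norm_mul, norm_pow, hnr]
          exact mul_le_mul_of_nonneg_right (hS b hb0 hbε₁) (by positivity)
        · rw [norm_pow, hnr]
      calc (c^2/2) * n ≤ _ := h1
        _ = _ := by rw [hD']
        _ ≤ _ := h2
    have hnn : 0 ≤ n := norm_nonneg _
    have hfin : n ≤ (4*K/c^2) * b^2 := by
      have hηM : (M+1) * η ≤ c^2/4 := by
        rw [le_div_iff₀ (by positivity : (0:ℝ) < 4*(M+1))] at hηc
        nlinarith [hηc]
      have hstep : M * n^2 + n^3 ≤ (c^2/4) * n := by
        have : M * n^2 + n^3 = (M + n) * n * n := by ring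
        rw [this]
        have h1 : (M + n) * n ≤ (M+1) * η := by nlinarith
        nlinarith
      have h2 : (c^2/4) * n ≤ K * b^2 := by nlinarith [hDn, hstep]
      rw [show 4*K/c^2*b^2 = (4*(K*b^2))/c^2 by ring, le_div_iff₀ (by positivity)]
      nlinarith [h2]
    refine ⟨r, hr, ?_⟩
    rw [hnr]
    exact hfin
  set X : ℝ → ℂ := fun b => if hb : b ∈ Set.Ioo (0:ℝ) ε then (spec b hb).choose else 0 with hX
  refine ⟨ε, hε, X, fun b hb => ?_, ?_⟩
  · simp only [hX, dif_pos hb]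
    exact (spec b hb).choose_spec.1
  · rw [isBigO_iff]
    refine ⟨4*K/c^2, ?_⟩
    filter_upwards [Ioo_mem_nhdsGT_of_mem (Set.mem_Ico.mpr ⟨le_refl (0:ℝ), hε⟩)] with b hb
    simp only [hX, dif_pos hb]
    have h := (spec b hb).choose_spec.2
    calc ‖(spec b hb).choose - A b‖ ≤ (4*K/c^2) * b^2 := h
      _ = (4*K/c^2) * ‖b^2‖ := by
          rw [Real.norm_of_nonneg (by positivity : (0:ℝ) ≤ b^2)]

lemma case_aux (c γ : ℝ) (hc : 0 < c) (A : ℝ → ℂ) (A0 A1 v w D0 dv dw : ℂ)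
    (hA : ∀ b : ℝ, A b = A0 + (b:ℂ)*A1)
    (hEid : ∀ b : ℝ, R c γ b (A b) = (b:ℂ)^2 * (v + (b:ℂ)*w))
    (hDid : ∀ b : ℝ, 3*(A b)^2 + 2*I*(b:ℂ)*(A b) - (c:ℂ)^2 = D0 + (b:ℂ)*(dv + (b:ℂ)*dw))
    (hD0 : c^2 ≤ ‖D0‖) :
    ∃ ε : ℝ, 0 < ε ∧ ∃ X : ℝ → ℂ, (∀ b ∈ Set.Ioo (0:ℝ) ε, R c γ b (X b) = 0) ∧
      (fun b : ℝ => X b - A b) =O[nhdsWithin 0 (Set.Ioi 0)] (fun b : ℝ => b^2) := by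
  set ε₁ : ℝ := min 1 (c^2/(2*(‖dv‖+‖dw‖+1))) with hε₁def
  have hε₁ : 0 < ε₁ := lt_min one_pos (by positivity)
  apply main_aux c γ hc A (‖v‖+‖w‖) (‖3*A0‖ + ‖3*A1+I‖) ε₁ (by positivity) (by positivity) hε₁
  · intro b hb0 hbε₁
    have hb1 : b ≤ 1 := le_trans hbε₁ (min_le_left _ _)
    rw [hEid b, norm_mul, norm_pow, Complex.norm_real, Real.norm_of_nonneg hb0.le]
    calc b^2 * ‖v + (b:ℂ)*w‖ ≤ b^2 * (‖v‖+‖w‖) := by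
          exact mul_le_mul_of_nonneg_left (norm_affine v w hb0.le hb1) (by positivity)
      _ = (‖v‖+‖w‖) * b^2 := by ring
  · intro b hb0 hbε₁
    have hb1 : b ≤ 1 := le_trans hbε₁ (min_le_left _ _)
    have hb2 : b ≤ c^2/(2*(‖dv‖+‖dw‖+1)) := le_trans hbε₁ (min_le_right _ _)
    exact D_lower hc hb0.le hb1 hb2 hD0 (hDid b)
  · intro b hb0 hbε₁
    have hb1 : b ≤ 1 := le_trans hbε₁ (min_le_left _ _)
    rw [show 3*(A b) + I*(b:ℂ) = 3*A0 + (b:ℂ)*(3*A1+I) by rw [hA b]; ring]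
    exact norm_affine _ _ hb0.le hb1


/-- There exist ε > 0 and functions X⁻, X⁰, X⁺ : (0, ε) → ℂ such that for
every b ∈ (0, ε) the values X⁻(b), X⁰(b), X⁺(b) are roots of R_b, and as b → 0⁺:
X^±(b) = ±c − i ((γ−1)/(2γ)) b + O(b²) and X⁰(b) = −(i/γ) b + O(b²). -/
theorem stmt_8 (c γ : ℝ) (hc : 0 < c) (hγ : 1 < γ) :
    ∃ ε : ℝ, 0 < ε ∧ ∃ Xm X0 Xp : ℝ → ℂ,
      (∀ b : ℝ, b ∈ Set.Ioo 0 ε →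
        R c γ b (Xm b) = 0 ∧ R c γ b (X0 b) = 0 ∧ R c γ b (Xp b) = 0)
      ∧ (fun b : ℝ => Xm b - (-(c : ℂ) - I * (((γ : ℂ) - 1) / (2 * (γ : ℂ))) * (b : ℂ)))
          =O[nhdsWithin 0 (Set.Ioi 0)] (fun b : ℝ => b ^ 2)
      ∧ (fun b : ℝ => Xp b - ((c : ℂ) - I * (((γ : ℂ) - 1) / (2 * (γ : ℂ))) * (b : ℂ)))
          =O[nhdsWithin 0 (Set.Ioi 0)] (fun b : ℝ => b ^ 2)
      ∧ (fun b : ℝ => X0 b - (-(I / (γ : ℂ)) * (b : ℂ)))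
          =O[nhdsWithin 0 (Set.Ioi 0)] (fun b : ℝ => b ^ 2) := by
  have hγ0 : (γ:ℂ) ≠ 0 := by
    exact_mod_cast Complex.ofReal_ne_zero.mpr (by linarith)
  set β : ℂ := ((γ:ℂ)-1)/(2*(γ:ℂ)) with hβdef
  have hβ : 2*(γ:ℂ)*β = (γ:ℂ)-1 := by rw [hβdef]; field_simp
  have ha : (γ:ℂ) * (γ:ℂ)⁻¹ = 1 := mul_inv_cancel₀ hγ0
  have hnc2 : ‖2*(c:ℂ)^2‖ = 2*c^2 := by
    rw [norm_mul, norm_pow, Complex.norm_real, Real.norm_of_nonneg hc.le]; norm_num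
  have hnc1 : ‖-(c:ℂ)^2‖ = c^2 := by
    rw [norm_neg, norm_pow, Complex.norm_real, Real.norm_of_nonneg hc.le]
  -- plus case
  obtain ⟨εp, hεp, Xp, hXp, hOp⟩ := case_aux c γ hc
    (fun b : ℝ => (c:ℂ) - I*β*(b:ℂ)) (c:ℂ) (-(I*β))
    ((c:ℂ)*β*(2-3*β)) (I*β^2*(β-1))
    (2*(c:ℂ)^2) (2*I*(c:ℂ)*(1-3*β)) (2*β - 3*β^2)
    (fun b => by ring)
    (fun b => Eplus c γ b β hγ0 hβ)
    (fun b => Dplus c b β)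
    (by rw [hnc2]; nlinarith)
  -- minus case
  obtain ⟨εm, hεm, Xm, hXm, hOm⟩ := case_aux c γ hc
    (fun b : ℝ => -(c:ℂ) - I*β*(b:ℂ)) (-(c:ℂ)) (-(I*β))
    (-((c:ℂ)*β*(2-3*β))) (I*β^2*(β-1))
    (2*(c:ℂ)^2) (-(2*I*(c:ℂ)*(1-3*β))) (2*β - 3*β^2)
    (fun b => by ring)
    (fun b => Eminus c γ b β hγ0 hβ)
    (fun b => Dminus c b β)
    (by rw [hnc2]; nlinarith)
  -- zero case
  have hz : ∀ b : ℝ, (-(I/(γ:ℂ)) * (b:ℂ)) = -(I*(γ:ℂ)⁻¹)*(b:ℂ) := by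
    intro b; rw [div_eq_mul_inv]
  obtain ⟨ε0, hε0, X0, hX0, hO0⟩ := case_aux c γ hc
    (fun b : ℝ => -(I/(γ:ℂ)) * (b:ℂ)) 0 (-(I/(γ:ℂ)))
    0 (-I*((γ:ℂ)⁻¹)^2*(1-(γ:ℂ)⁻¹))
    (-(c:ℂ)^2) 0 (2*(γ:ℂ)⁻¹ - 3*((γ:ℂ)⁻¹)^2)
    (fun b => by ring)
    (fun b => by
      show R c γ b (-(I/(γ:ℂ)) * (b:ℂ)) = _
      rw [hz b]; exact Ezero c γ b _ hγ0 ha)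
    (fun b => by
      show 3*(-(I/(γ:ℂ)) * (b:ℂ))^2 + 2*I*(b:ℂ)*(-(I/(γ:ℂ)) * (b:ℂ)) - (c:ℂ)^2 = _
      rw [hz b]; exact Dzero c b _)
    (by rw [hnc1])
  refine ⟨min εm (min ε0 εp), by positivity, Xm, X0, Xp, fun b hb => ?_, hOm, hOp, hO0⟩
  obtain ⟨hb0, hbε⟩ := hb
  exact ⟨hXm b ⟨hb0, lt_of_lt_of_le hbε (min_le_left _ _)⟩,
    hX0 b ⟨hb0, lt_of_lt_of_le hbε ((min_le_right _ _).trans (min_le_left _ _))⟩,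
    hXp b ⟨hb0, lt_of_lt_of_le hbε ((min_le_right _ _).trans (min_le_right _ _))⟩⟩
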